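/- Let δ be the usual y-derivative on R = 𝕆[y] and T = R[x; id, δ] the non-associative differential operator ring. Then y ∈ N(T): y associates with all pairs of elements of T in every position. -/

import Mathlib

/-- The octonions, realized via the Cayley–Dickson doubling of the real quaternions. -/
def Octonion : Type := Quaternion ℝ × Quaternion ℝ

noncomputable instance : AddCommGroup Octonion :=
  inferInstanceAs (AddCommGroup (Quaternion ℝ × Quaternion ℝ))

noncomputable instance : Module ℝ Octonion :=
  inferInstanceAs (Module ℝ (Quaternion ℝ × Quaternion ℝ))

/-- Cayley–Dickson multiplication on pairs of quaternions. -/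
noncomputable def Octonion.omul (a b : Quaternion ℝ × Quaternion ℝ) :
    Quaternion ℝ × Quaternion ℝ :=
  (a.1 * b.1 - star b.2 * a.2, b.2 * a.1 + a.2 * star b.1)

noncomputable instance : One Octonion := ⟨((1 : Quaternion ℝ), (0 : Quaternion ℝ))⟩

theorem Octonion.omul_add (a b c : Quaternion ℝ × Quaternion ℝ) :
    Octonion.omul a (b + c) = Octonion.omul a b + Octonion.omul a c := by
  unfold Octonion.omul
  refine Prod.ext ?_ ?_ <;>
    simp only [Prod.fst_add, Prod.snd_add, mul_add, add_mul, star_add] <;> abel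

theorem Octonion.add_omul (a b c : Quaternion ℝ × Quaternion ℝ) :
    Octonion.omul (a + b) c = Octonion.omul a c + Octonion.omul b c := by
  unfold Octonion.omul
  refine Prod.ext ?_ ?_ <;>
    simp only [Prod.fst_add, Prod.snd_add, mul_add, add_mul, star_add] <;> abel

theorem Octonion.zero_omul (a : Quaternion ℝ × Quaternion ℝ) :
    Octonion.omul 0 a = 0 := by
  unfold Octonion.omul; refine Prod.ext ?_ ?_ <;> simp

theorem Octonion.omul_zero (a : Quaternion ℝ × Quaternion ℝ) :
    Octonion.omul a 0 = 0 := by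
  unfold Octonion.omul; refine Prod.ext ?_ ?_ <;> simp

noncomputable instance : NonUnitalNonAssocRing Octonion :=
  { (inferInstanceAs (AddCommGroup Octonion) : AddCommGroup Octonion) with
    mul := Octonion.omul
    left_distrib := fun a b c => Octonion.omul_add a b c
    right_distrib := fun a b c => Octonion.add_omul a b c
    zero_mul := fun a => Octonion.zero_omul a
    mul_zero := fun a => Octonion.omul_zero a }

/-- `R = 𝕆[y]`, the polynomial ring over the octonions, as finitely supported
sequences of octonion coefficients. -/
noncomputable abbrev OctPoly : Type := ℕ →₀ Octonion

/-- The convolution product on `𝕆[y]`. -/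
noncomputable instance : Mul OctPoly :=
  ⟨fun p q => p.sum fun i a => q.sum fun j b => Finsupp.single (i + j) (a * b)⟩

theorem OctPoly.mul_zero (a : OctPoly) : a * (0 : OctPoly) = 0 := by
  show (Finsupp.sum a fun i c => Finsupp.sum 0 fun j b => Finsupp.single (i + j) (c * b)) = 0
  simp

/-- The variable `y` of `𝕆[y]`. -/
noncomputable def Yv : OctPoly := Finsupp.single 1 (1 : Octonion)

/-- The constant polynomial `1` of `𝕆[y]`. -/
noncomputable def oneR : OctPoly := Finsupp.single 0 (1 : Octonion)

/-- The `y`-degree of a polynomial in `𝕆[y]` (with junk value `0` at `0`). -/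
def degy (r : OctPoly) : ℕ := WithBot.unbotD 0 (r.support.max)

/-- The underlying additive group of the Ore extension `S = R[x; σ, δ]`:
finitely supported sequences of coefficients in `R = 𝕆[y]`. -/
noncomputable abbrev OrePoly : Type := ℕ →₀ OctPoly

/-- Left multiplication by `x` in `R[x; σ, δ]`, determined by
`x·(r xʲ) = σ(r) x^(j+1) + δ(r) xʲ`. -/
noncomputable def xmul (σ δ : OctPoly →+ OctPoly) : OrePoly →+ OrePoly :=
  Finsupp.liftAddHom fun j =>
    (Finsupp.singleAddHom (j + 1)).comp σ + (Finsupp.singleAddHom j).comp δ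

/-- The multiplication of the non-associative Ore extension `R[x; σ, δ]`:
`(Σᵢ aᵢ xⁱ)·q = Σᵢ aᵢ·(xⁱ·q)`, where `xⁱ` acts via iterated `xmul` and `aᵢ`
multiplies every coefficient from the left. -/
noncomputable def oreMul (σ δ : OctPoly →+ OctPoly) (p q : OrePoly) : OrePoly :=
  p.sum fun i a => Finsupp.mapRange (a * ·) (OctPoly.mul_zero a) ((xmul σ δ)^[i] q)

/-- The constant `1 = 1·x⁰` of the Ore extension. -/
noncomputable def oneS : OrePoly := Finsupp.single 0 oneR

/-- The `x`-degree of an element of the Ore extension, valued in `ℤ ∪ {-∞}`. -/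
def xdeg (p : OrePoly) : WithBot ℤ := (p.support.max).map (Nat.cast : ℕ → ℤ)

/-- `σ` is a unital `ℝ`-algebra endomorphism of `𝕆[y]`. -/
def IsAlgEndo (σ : OctPoly →+ OctPoly) : Prop :=
  (∀ p q : OctPoly, σ (p * q) = σ p * σ q) ∧ σ oneR = oneR ∧
    (∀ (r : ℝ) (p : OctPoly), σ (r • p) = r • σ p)

/-- `δ` is a `σ`-derivation of `𝕆[y]`. -/
def IsSigmaDerivation (σ δ : OctPoly →+ OctPoly) : Prop :=
  (∀ p q : OctPoly, δ (p * q) = σ p * δ q + δ p * q) ∧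
    (∀ (r : ℝ) (p : OctPoly), δ (r • p) = r • δ p)

/-- An element of `𝕆` is real if it is a real multiple of `1`. -/
def Octonion.IsReal (c : Octonion) : Prop := ∃ r : ℝ, c = r • (1 : Octonion)

/-- Membership in the nucleus of the Ore extension `R[x; σ, δ]`. -/
def OreNucleus (σ δ : OctPoly →+ OctPoly) (a : OrePoly) : Prop :=
  (∀ b c : OrePoly, oreMul σ δ a (oreMul σ δ b c) = oreMul σ δ (oreMul σ δ a b) c) ∧
  (∀ b c : OrePoly, oreMul σ δ (oreMul σ δ b a) c = oreMul σ δ b (oreMul σ δ a c)) ∧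
  (∀ b c : OrePoly, oreMul σ δ (oreMul σ δ b c) a = oreMul σ δ b (oreMul σ δ c a))

/-- The identity endomorphism of `𝕆[y]`. -/
noncomputable def idR : OctPoly →+ OctPoly := AddMonoidHom.id OctPoly

/-- The usual `y`-derivative `d/dy` on `𝕆[y]`: `c·yʲ ↦ (j·c)·y^(j-1)`. -/
noncomputable def derivR : OctPoly →+ OctPoly :=
  Finsupp.liftAddHom fun j =>
    (Finsupp.singleAddHom (j - 1)).comp (j • AddMonoidHom.id Octonion)

/-- `y`, viewed as a degree-zero element of `T = 𝕆[y][x; id, d/dy]`. -/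
noncomputable def yT : OrePoly := Finsupp.single 0 Yv

section AuxDevelopment
open Finsupp

theorem Octonion.one_mul (b : Octonion) : (1 : Octonion) * b = b := by
  show Octonion.omul ((1 : Quaternion ℝ), (0 : Quaternion ℝ)) b = b
  unfold Octonion.omul
  refine Prod.ext ?_ ?_ <;> simp

theorem Octonion.mul_one (b : Octonion) : b * (1 : Octonion) = b := by
  show Octonion.omul b ((1 : Quaternion ℝ), (0 : Quaternion ℝ)) = b
  unfold Octonion.omul
  refine Prod.ext ?_ ?_ <;> simp

theorem OctPoly.mul_def (p q : OctPoly) :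
    p * q = p.sum fun i a => q.sum fun j b => Finsupp.single (i + j) (a * b) := rfl

theorem OctPoly.zero_mul (q : OctPoly) : (0 : OctPoly) * q = 0 := by
  rw [OctPoly.mul_def, Finsupp.sum_zero_index]

theorem OctPoly.single_mul_single (i j : ℕ) (a b : Octonion) :
    (Finsupp.single i a : OctPoly) * Finsupp.single j b = Finsupp.single (i + j) (a * b) := by
  rw [OctPoly.mul_def]
  rw [Finsupp.sum_single_index (h_zero := by simp)]
  rw [Finsupp.sum_single_index (h_zero := by simp)]

theorem OctPoly.mul_add (p q r : OctPoly) : p * (q + r) = p * q + p * r := by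
  simp only [OctPoly.mul_def]
  rw [← Finsupp.sum_add]
  refine Finsupp.sum_congr fun i _ => ?_
  refine Finsupp.sum_add_index' (fun j => ?_) (fun j b₁ b₂ => ?_)
  · rw [MulZeroClass.mul_zero, Finsupp.single_zero]
  · rw [_root_.mul_add, Finsupp.single_add]

theorem OctPoly.add_mul (p q r : OctPoly) : (p + q) * r = p * r + q * r := by
  simp only [OctPoly.mul_def]
  refine Finsupp.sum_add_index' (fun i => ?_) (fun i a b => ?_)
  · refine Finset.sum_eq_zero fun j _ => ?_
    simp only []
    rw [MulZeroClass.zero_mul, Finsupp.single_zero]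
  · rw [← Finsupp.sum_add]
    refine Finsupp.sum_congr fun j _ => ?_
    rw [_root_.add_mul, Finsupp.single_add]

theorem OctPoly.Yv_mul_single (j : ℕ) (b : Octonion) :
    Yv * Finsupp.single j b = Finsupp.single (j + 1) b := by
  rw [Yv, OctPoly.single_mul_single, Octonion.one_mul, add_comm]

theorem OctPoly.single_mul_Yv (j : ℕ) (b : Octonion) :
    Finsupp.single j b * Yv = Finsupp.single (j + 1) b := by
  rw [Yv, OctPoly.single_mul_single, Octonion.mul_one]

theorem OctPoly.mul_oneR (p : OctPoly) : p * oneR = p := by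
  induction p using Finsupp.induction_linear with
  | zero => exact OctPoly.zero_mul oneR
  | add f g hf hg => rw [OctPoly.add_mul, hf, hg]
  | single j b => rw [oneR, OctPoly.single_mul_single, Octonion.mul_one, add_zero]

theorem OctPoly.Yv_comm (p : OctPoly) : Yv * p = p * Yv := by
  induction p using Finsupp.induction_linear with
  | zero => rw [OctPoly.mul_zero, OctPoly.zero_mul]
  | add f g hf hg => rw [OctPoly.mul_add, OctPoly.add_mul, hf, hg]
  | single j b => rw [OctPoly.Yv_mul_single, OctPoly.single_mul_Yv]

theorem OctPoly.Yv_assoc_left (p q : OctPoly) : (Yv * p) * q = Yv * (p * q) := by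
  induction p using Finsupp.induction_linear with
  | zero => simp only [OctPoly.mul_zero, OctPoly.zero_mul]
  | add f g hf hg => simp only [OctPoly.mul_add, OctPoly.add_mul, hf, hg]
  | single j b =>
    induction q using Finsupp.induction_linear with
    | zero => simp only [OctPoly.mul_zero, OctPoly.zero_mul]
    | add f g hf hg => simp only [OctPoly.mul_add, OctPoly.add_mul, hf, hg]
    | single k c =>
      rw [OctPoly.Yv_mul_single, OctPoly.single_mul_single, OctPoly.single_mul_single,
        OctPoly.Yv_mul_single, add_right_comm]

theorem OctPoly.Yv_assoc_mid (p q : OctPoly) : (p * Yv) * q = p * (Yv * q) := by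
  induction p using Finsupp.induction_linear with
  | zero => simp only [OctPoly.mul_zero, OctPoly.zero_mul]
  | add f g hf hg => simp only [OctPoly.mul_add, OctPoly.add_mul, hf, hg]
  | single j b =>
    induction q using Finsupp.induction_linear with
    | zero => simp only [OctPoly.mul_zero, OctPoly.zero_mul]
    | add f g hf hg => simp only [OctPoly.mul_add, OctPoly.add_mul, hf, hg]
    | single k c =>
      rw [OctPoly.single_mul_Yv, OctPoly.Yv_mul_single, OctPoly.single_mul_single,
        OctPoly.single_mul_single, add_assoc, add_comm 1 k]

theorem OctPoly.Yv_assoc_right (p q : OctPoly) : (p * q) * Yv = p * (q * Yv) := by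
  induction p using Finsupp.induction_linear with
  | zero => simp only [OctPoly.mul_zero, OctPoly.zero_mul]
  | add f g hf hg => simp only [OctPoly.mul_add, OctPoly.add_mul, hf, hg]
  | single j b =>
    induction q using Finsupp.induction_linear with
    | zero => simp only [OctPoly.mul_zero, OctPoly.zero_mul]
    | add f g hf hg => simp only [OctPoly.mul_add, OctPoly.add_mul, hf, hg]
    | single k c =>
      rw [OctPoly.single_mul_single, OctPoly.single_mul_Yv, OctPoly.single_mul_Yv,
        OctPoly.single_mul_single, add_assoc]

theorem derivR_single (j : ℕ) (b : Octonion) :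
    derivR (Finsupp.single j b) = Finsupp.single (j - 1) (j • b) := by
  rw [derivR, Finsupp.liftAddHom_apply_single]
  rfl

theorem derivR_Yv : derivR Yv = oneR := by
  rw [Yv, derivR_single, oneR]
  norm_num

theorem derivR_oneR : derivR oneR = 0 := by
  rw [oneR, derivR_single]
  simp

theorem derivR_Yv_mul (p : OctPoly) : derivR (Yv * p) = Yv * derivR p + p := by
  induction p using Finsupp.induction_linear with
  | zero => simp only [OctPoly.mul_zero, map_zero, add_zero]
  | add f g hf hg =>
    rw [OctPoly.mul_add, map_add, map_add, hf, hg, OctPoly.mul_add]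
    abel
  | single j b =>
    cases j with
    | zero =>
      rw [OctPoly.Yv_mul_single, derivR_single, derivR_single]
      simp [OctPoly.mul_zero]
    | succ k =>
      rw [OctPoly.Yv_mul_single, derivR_single, derivR_single, Nat.add_sub_cancel,
        Nat.add_sub_cancel, OctPoly.Yv_mul_single, ← Finsupp.single_add, succ_nsmul]

theorem derivR_mul_Yv (p : OctPoly) : derivR (p * Yv) = derivR p * Yv + p := by
  rw [← OctPoly.Yv_comm, derivR_Yv_mul, OctPoly.Yv_comm]

----------------------------------------------------------------
-- OrePoly layer

/-- Left multiplication by `a` on all coefficients, as an `AddMonoidHom`. -/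
noncomputable def LmulOre (a : OctPoly) : OrePoly →+ OrePoly :=
  Finsupp.mapRange.addMonoidHom (AddMonoidHom.mk' (fun t => a * t) (OctPoly.mul_add a))

theorem LmulOre_coeff (a : OctPoly) (q : OrePoly) (n : ℕ) :
    LmulOre a q n = a * q n :=
  Finsupp.mapRange_apply (hf := map_zero _)

theorem LmulOre_single (a : OctPoly) (k : ℕ) (u : OctPoly) :
    LmulOre a (Finsupp.single k u) = Finsupp.single k (a * u) :=
  Finsupp.mapRange_single (hf := map_zero _)

theorem LmulOre_zero (q : OrePoly) : LmulOre 0 q = 0 := by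
  ext n
  rw [LmulOre_coeff, OctPoly.zero_mul]
  rfl

theorem oreMul_def (p q : OrePoly) :
    oreMul idR derivR p q = p.sum fun i a => LmulOre a ((xmul idR derivR)^[i] q) := rfl

theorem oreMul_single_left (i : ℕ) (r : OctPoly) (q : OrePoly) :
    oreMul idR derivR (Finsupp.single i r) q = LmulOre r ((xmul idR derivR)^[i] q) := by
  rw [oreMul_def]
  exact Finsupp.sum_single_index (LmulOre_zero _)

theorem oreMul_add_left (p p' q : OrePoly) :
    oreMul idR derivR (p + p') q = oreMul idR derivR p q + oreMul idR derivR p' q := by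
  simp only [oreMul_def]
  refine Finsupp.sum_add_index' (fun i => LmulOre_zero _) (fun i a a' => ?_)
  ext n
  simp only [LmulOre_coeff, Finsupp.add_apply, OctPoly.add_mul]

theorem oreMul_zero_left (q : OrePoly) : oreMul idR derivR 0 q = 0 := by
  rw [oreMul_def, Finsupp.sum_zero_index]

theorem oreMul_add_right (p q q' : OrePoly) :
    oreMul idR derivR p (q + q') = oreMul idR derivR p q + oreMul idR derivR p q' := by
  simp only [oreMul_def]
  rw [← Finsupp.sum_add]
  refine Finsupp.sum_congr fun i _ => ?_
  rw [iterate_map_add, map_add]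

/-- Right multiplication by a fixed element, as an `AddMonoidHom`. -/
noncomputable def Rc (c : OrePoly) : OrePoly →+ OrePoly :=
  AddMonoidHom.mk' (fun p => oreMul idR derivR p c) (fun p p' => oreMul_add_left p p' c)

theorem xmul_single (j : ℕ) (r : OctPoly) :
    xmul idR derivR (Finsupp.single j r) =
      Finsupp.single (j + 1) r + Finsupp.single j (derivR r) := by
  rw [xmul, Finsupp.liftAddHom_apply_single]
  rfl

theorem nsmul_single (n : ℕ) (k : ℕ) (s : OctPoly) :
    n • (Finsupp.single k s : OrePoly) = Finsupp.single k (n • s) :=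
  ((Finsupp.singleAddHom k).map_nsmul n s).symm

theorem nsmul_single' (n : ℕ) (k : ℕ) (s : Octonion) :
    n • (Finsupp.single k s : OctPoly) = Finsupp.single k (n • s) :=
  ((Finsupp.singleAddHom k).map_nsmul n s).symm

theorem Rc_apply (c p : OrePoly) : Rc c p = oreMul idR derivR p c := rfl

theorem LmulOre_Yv_mul (r : OctPoly) (q : OrePoly) :
    LmulOre (Yv * r) q = LmulOre Yv (LmulOre r q) := by
  ext n
  simp only [LmulOre_coeff, OctPoly.Yv_assoc_left]

theorem LmulOre_mul_Yv (r : OctPoly) (q : OrePoly) :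
    LmulOre (r * Yv) q = LmulOre r (LmulOre Yv q) := by
  ext n
  simp only [LmulOre_coeff, OctPoly.Yv_assoc_mid]

theorem single_shift {M : Type*} [AddCommMonoid M] (j : ℕ) (v : M) :
    (Finsupp.single (j - 1 + 1) (j • v) : ℕ →₀ M) = Finsupp.single j (j • v) := by
  cases j with
  | zero => simp
  | succ k => rw [Nat.succ_sub_one]

theorem xmul_LmulYv (q : OrePoly) :
    xmul idR derivR (LmulOre Yv q) = LmulOre Yv (xmul idR derivR q) + q := by
  induction q using Finsupp.induction_linear with
  | zero => simp only [map_zero, add_zero]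
  | add f g hf hg =>
    simp only [map_add, hf, hg]
    abel
  | single j s =>
    simp only [LmulOre_single, xmul_single, derivR_Yv_mul, Finsupp.single_add, map_add]
    abel

theorem xmul_iter_LmulYv (i : ℕ) (q : OrePoly) :
    (⇑(xmul idR derivR))^[i + 1] (LmulOre Yv q) =
      LmulOre Yv ((⇑(xmul idR derivR))^[i + 1] q) + (i + 1) • (⇑(xmul idR derivR))^[i] q := by
  induction i generalizing q with
  | zero => simpa using xmul_LmulYv q
  | succ k ih =>
    rw [Function.iterate_succ_apply' _ (k + 1), ih, map_add, map_nsmul, xmul_LmulYv,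
      ← Function.iterate_succ_apply' (⇑(xmul idR derivR)) (k + 1) q,
      ← Function.iterate_succ_apply' (⇑(xmul idR derivR)) k q]
    conv_rhs => rw [succ_nsmul]
    abel

theorem xmul_iter_yT (j : ℕ) :
    (⇑(xmul idR derivR))^[j] yT =
      Finsupp.single j Yv + j • Finsupp.single (j - 1) oneR := by
  induction j with
  | zero => simp [yT]
  | succ k ih =>
    rw [Function.iterate_succ_apply', ih, map_add, map_nsmul, xmul_single, xmul_single,
      derivR_Yv, derivR_oneR, Finsupp.single_zero, add_zero, nsmul_single, nsmul_single,
      single_shift, Nat.add_sub_cancel, succ_nsmul, Finsupp.single_add]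
    abel

theorem Rc_yT_single (j : ℕ) (s : OctPoly) :
    Rc yT (Finsupp.single j s) =
      Finsupp.single j (s * Yv) + j • Finsupp.single (j - 1) s := by
  rw [Rc_apply, oreMul_single_left, xmul_iter_yT, map_add, map_nsmul, LmulOre_single,
    LmulOre_single, OctPoly.mul_oneR]

theorem Rc_yT_xmul (q : OrePoly) :
    Rc yT (xmul idR derivR q) = xmul idR derivR (Rc yT q) := by
  induction q using Finsupp.induction_linear with
  | zero => simp only [map_zero]
  | add f g hf hg => simp only [map_add, hf, hg]
  | single j s =>
    simp only [xmul_single, map_add, map_nsmul, Rc_yT_single, derivR_mul_Yv,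
      Nat.add_sub_cancel, smul_add, nsmul_single, single_shift, succ_nsmul,
      Finsupp.single_add]
    abel

theorem Rc_yT_xmul_iter (i : ℕ) (q : OrePoly) :
    Rc yT ((⇑(xmul idR derivR))^[i] q) = (⇑(xmul idR derivR))^[i] (Rc yT q) := by
  induction i generalizing q with
  | zero => rfl
  | succ k ih =>
    rw [Function.iterate_succ_apply', Rc_yT_xmul, ih,
      ← Function.iterate_succ_apply' (⇑(xmul idR derivR)) k (Rc yT q)]

theorem Rc_yT_LmulOre (r : OctPoly) (q : OrePoly) :
    Rc yT (LmulOre r q) = LmulOre r (Rc yT q) := by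
  induction q using Finsupp.induction_linear with
  | zero => simp only [map_zero]
  | add f g hf hg => simp only [map_add, hf, hg]
  | single k u =>
    simp only [LmulOre_single, Rc_yT_single, map_add, map_nsmul,
      OctPoly.Yv_assoc_right]

theorem oreMul_yT_left (q : OrePoly) : oreMul idR derivR yT q = LmulOre Yv q := by
  rw [yT, oreMul_single_left, Function.iterate_zero_apply]

theorem y_mem_nucleus'_aux : OreNucleus idR derivR yT := by
  refine ⟨fun b c => ?_, fun b c => ?_, fun b c => ?_⟩
  · rw [oreMul_yT_left, oreMul_yT_left]
    induction b using Finsupp.induction_linear with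
    | zero => simp only [oreMul_zero_left, map_zero]
    | add f g hf hg => simp only [oreMul_add_left, map_add, hf, hg]
    | single i r =>
      rw [oreMul_single_left, LmulOre_single, oreMul_single_left, ← LmulOre_Yv_mul]
  · rw [oreMul_yT_left]
    induction b using Finsupp.induction_linear with
    | zero => simp only [oreMul_zero_left, map_zero]
    | add f g hf hg => simp only [oreMul_add_left, hf, hg]
    | single i r =>
      rw [show oreMul idR derivR (Finsupp.single i r) yT = Rc yT (Finsupp.single i r) from rfl,
        Rc_yT_single, oreMul_add_left, oreMul_single_left,
        show oreMul idR derivR (i • Finsupp.single (i - 1) r) c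
            = i • oreMul idR derivR (Finsupp.single (i - 1) r) c from (Rc c).map_nsmul _ _,
        oreMul_single_left, oreMul_single_left]
      cases i with
      | zero =>
        simp only [Function.iterate_zero_apply, zero_smul, add_zero, LmulOre_mul_Yv]
      | succ k =>
        rw [Nat.add_sub_cancel, xmul_iter_LmulYv, map_add, map_nsmul, LmulOre_mul_Yv]
  · rw [show oreMul idR derivR (oreMul idR derivR b c) yT
        = Rc yT (oreMul idR derivR b c) from rfl,
      show oreMul idR derivR c yT = Rc yT c from rfl]
    induction b using Finsupp.induction_linear with
    | zero => simp only [oreMul_zero_left, map_zero]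
    | add f g hf hg => simp only [oreMul_add_left, map_add, hf, hg]
    | single i r =>
      rw [oreMul_single_left, Rc_yT_LmulOre, Rc_yT_xmul_iter, oreMul_single_left]

end AuxDevelopment

/-- Let `δ` be the usual `y`-derivative on `R = 𝕆[y]` and `T = R[x; id, δ]` the
non-associative differential operator ring.  Then `y ∈ N(T)`: `y` associates with
all pairs of elements of `T` in every position. -/
theorem y_mem_nucleus : OreNucleus idR derivR yT := y_mem_nucleus'_aux
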